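/- For a jointly convex GNEP with regularized Nikaido–Isoda function ψ_a and its value function V_a(x) = max_{y∈X} ψ_a(x,y): a point x* ∈ X satisfies x* = y^a(x*) (i.e., x* is the unique maximizer of ψ_a(x*,·) over X) if and only if V_a(x*) = 0, if and only if x* is a normalized Nash equilibrium; moreover V_a(x) ≥ 0 for all x ∈ X. -/

import Mathlib

/-- Polar of a set in a real inner product space. -/
def polarSet {E : Type*} [NormedAddCommGroup E] [InnerProductSpace ℝ E] (S : Set E) : Set E :=
  {v | ∀ z ∈ S, (inner ℝ v z : ℝ) ≤ 0}

/-- Normal cone to a set `X` at a point `x`. -/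
def normalCone {E : Type*} [NormedAddCommGroup E] [InnerProductSpace ℝ E]
    (X : Set E) (x : E) : Set E :=
  {v | ∀ z ∈ X, (inner ℝ v (z - x) : ℝ) ≤ 0}

/-- Tangent cone: polar of the normal cone. -/
def tangentConeSet {E : Type*} [NormedAddCommGroup E] [InnerProductSpace ℝ E]
    (X : Set E) (x : E) : Set E :=
  polarSet (normalCone X x)

/-- The regularized Nikaido–Isoda function of a GNEP with loss functions `θ i`:
`ψ_a(x,y) = Σ_i [θ_i(x) − θ_i(x_{-i},y_i) − (a/2)‖x_i − y_i‖²]`. -/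
noncomputable def psiReg {N : ℕ} {d : Fin N → ℕ}
    (θ : Fin N → (PiLp 2 fun i => EuclideanSpace ℝ (Fin (d i))) → ℝ) (a : ℝ)
    (x y : PiLp 2 fun i => EuclideanSpace ℝ (Fin (d i))) : ℝ :=
  ∑ i, (θ i x - θ i (WithLp.toLp 2 (Function.update (WithLp.ofLp x) i (y i))) - a / 2 * ‖x i - y i‖ ^ 2)

/-- The VI operator `F(x) = (∇_{x_i} θ_i(x))_i` of a jointly convex GNEP. -/
noncomputable def gnepF {N : ℕ} {d : Fin N → ℕ}
    (θ : Fin N → (PiLp 2 fun i => EuclideanSpace ℝ (Fin (d i))) → ℝ)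
    (x : PiLp 2 fun i => EuclideanSpace ℝ (Fin (d i))) :
    PiLp 2 fun i => EuclideanSpace ℝ (Fin (d i)) :=
  WithLp.toLp 2 fun i => gradient (fun zi => θ i (WithLp.toLp 2 (Function.update (WithLp.ofLp x) i zi))) (x i)

open Topology Filter

section Aux

variable {N : ℕ} {d : Fin N → ℕ}

lemma hasDerivAt_theta_line
    (θ : Fin N → (PiLp 2 fun i => EuclideanSpace ℝ (Fin (d i))) → ℝ)
    (hθdiff : ∀ i, ContDiff ℝ 1 (θ i)) (i : Fin N)
    (x : PiLp 2 fun i => EuclideanSpace ℝ (Fin (d i)))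
    (v : EuclideanSpace ℝ (Fin (d i))) :
    HasDerivAt (fun t : ℝ => θ i (WithLp.toLp 2 (Function.update (WithLp.ofLp x) i (x i + t • v))))
      (inner ℝ (gnepF θ x i) v : ℝ) 0 := by
  set L : EuclideanSpace ℝ (Fin (d i)) →L[ℝ] (PiLp 2 fun i => EuclideanSpace ℝ (Fin (d i))) :=
    LinearMap.toContinuousLinearMap
      ((WithLp.linearEquiv 2 ℝ (∀ i, EuclideanSpace ℝ (Fin (d i)))).symm.toLinearMap ∘ₗ
        LinearMap.single ℝ (fun i => EuclideanSpace ℝ (Fin (d i))) i) with hL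
  set u : EuclideanSpace ℝ (Fin (d i)) → (PiLp 2 fun i => EuclideanSpace ℝ (Fin (d i))) :=
    fun zi => WithLp.toLp 2 (Function.update (WithLp.ofLp x) i zi) with hu_def
  have hupd : u = fun zi => u 0 + L zi := by
    funext zi
    apply PiLp.ext
    intro j
    by_cases h : j = i
    · subst h
      simp [hu_def, hL, PiLp.add_apply, Function.update_self, LinearMap.coe_toContinuousLinearMap',
        LinearMap.coe_comp, LinearEquiv.coe_coe, WithLp.linearEquiv_symm_apply,
        LinearMap.single_apply, Pi.single_eq_same]
    · simp [hu_def, hL, PiLp.add_apply, Function.update_of_ne h,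
        LinearMap.coe_toContinuousLinearMap', LinearMap.coe_comp, LinearEquiv.coe_coe,
        WithLp.linearEquiv_symm_apply, LinearMap.single_apply,
        Pi.single_eq_of_ne h]
  have hu : HasFDerivAt u L (x i) := by
    rw [hupd]; exact L.hasFDerivAt.const_add _
  have hF := (((hθdiff i).differentiable one_ne_zero) (u (x i))).hasFDerivAt.comp (x i) hu
  have hdf : DifferentiableAt ℝ (fun zi => θ i (WithLp.toLp 2 (Function.update (WithLp.ofLp x) i zi))) (x i) :=
    hF.differentiableAt
  have hgrad : HasGradientAt (fun zi => θ i (WithLp.toLp 2 (Function.update (WithLp.ofLp x) i zi))) (gnepF θ x i) (x i) :=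
    hdf.hasGradientAt
  have hc : HasDerivAt (fun t : ℝ => x i + t • v) v 0 := by
    simpa using ((hasDerivAt_id (0:ℝ)).smul_const v).const_add (x i)
  have hl : HasFDerivAt (fun zi => θ i (WithLp.toLp 2 (Function.update (WithLp.ofLp x) i zi)))
      ((InnerProductSpace.toDual ℝ _) (gnepF θ x i)) ((fun t : ℝ => x i + t • v) 0) := by
    simpa using hgrad.hasFDerivAt
  have key := hl.comp_hasDerivAt 0 hc
  simpa [Function.comp_def, InnerProductSpace.toDual_apply_apply] using key

lemma grad_ineq
    (θ : Fin N → (PiLp 2 fun i => EuclideanSpace ℝ (Fin (d i))) → ℝ)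
    (hθdiff : ∀ i, ContDiff ℝ 1 (θ i))
    (hθconv : ∀ i x, ConvexOn ℝ Set.univ
      (fun zi : EuclideanSpace ℝ (Fin (d i)) => θ i (WithLp.toLp 2 (Function.update (WithLp.ofLp (p := 2) x) i zi))))
    (i : Fin N) (x : PiLp 2 fun i => EuclideanSpace ℝ (Fin (d i)))
    (w : EuclideanSpace ℝ (Fin (d i))) :
    θ i x + (inner ℝ (gnepF θ x i) (w - x i) : ℝ) ≤ θ i (WithLp.toLp 2 (Function.update (WithLp.ofLp x) i w)) := by
  have hd := hasDerivAt_theta_line θ hθdiff i x (w - x i)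
  have hφconv : ConvexOn ℝ Set.univ
      (fun t : ℝ => θ i (WithLp.toLp 2 (Function.update (WithLp.ofLp x) i (x i + t • (w - x i))))) := by
    have h := (hθconv i x).comp_affineMap (AffineMap.lineMap (x i) w)
    have he : (fun t : ℝ => θ i (WithLp.toLp 2 (Function.update (WithLp.ofLp x) i (x i + t • (w - x i))))) =
        ((fun zi : EuclideanSpace ℝ (Fin (d i)) => θ i (WithLp.toLp 2 (Function.update (WithLp.ofLp x) i zi))) ∘
          (AffineMap.lineMap (x i) w)) := by
      funext t
      simp only [Function.comp_apply, AffineMap.lineMap_apply, vsub_eq_sub, vadd_eq_add]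
      rw [add_comm]
    rw [he]
    simpa using h
  have hslope := hφconv.le_slope_of_hasDerivAt (Set.mem_univ 0) (Set.mem_univ 1)
    zero_lt_one hd
  rw [slope_def_field] at hslope
  simp only [zero_smul, add_zero, one_smul] at hslope
  have h1 : x i + (w - x i) = w := by abel
  rw [h1] at hslope
  have h0 : WithLp.toLp 2 (Function.update (WithLp.ofLp x) i (x i)) = x := by simp [Function.update_eq_self]
  rw [h0] at hslope
  have : (θ i (WithLp.toLp 2 (Function.update (WithLp.ofLp x) i w)) - θ i x) / (1 - 0) =
      θ i (WithLp.toLp 2 (Function.update (WithLp.ofLp x) i w)) - θ i x := by norm_num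
  rw [this] at hslope
  linarith

lemma psiReg_self
    (θ : Fin N → (PiLp 2 fun i => EuclideanSpace ℝ (Fin (d i))) → ℝ) (a : ℝ)
    (x : PiLp 2 fun i => EuclideanSpace ℝ (Fin (d i))) : psiReg θ a x x = 0 := by
  unfold psiReg
  simp [Function.update_eq_self]

end Aux

theorem stmt18 {N : ℕ} {d : Fin N → ℕ}
    (X : Set (PiLp 2 fun i => EuclideanSpace ℝ (Fin (d i))))
    (hXne : X.Nonempty) (hXcl : IsClosed X) (hXconv : Convex ℝ X)
    (θ : Fin N → (PiLp 2 fun i => EuclideanSpace ℝ (Fin (d i))) → ℝ)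
    (hθdiff : ∀ i, ContDiff ℝ 1 (θ i))
    (hθconv : ∀ i x, ConvexOn ℝ Set.univ
      (fun zi : EuclideanSpace ℝ (Fin (d i)) => θ i (WithLp.toLp 2 (Function.update (WithLp.ofLp (p := 2) x) i zi))))
    (a : ℝ) (ha : 0 < a)
    (Va : (PiLp 2 fun i => EuclideanSpace ℝ (Fin (d i))) → ℝ)
    (hVa : ∀ x ∈ X, ∃ y ∈ X, (∀ z ∈ X, psiReg θ a x z ≤ psiReg θ a x y) ∧
      Va x = psiReg θ a x y) :
    (∀ x ∈ X, 0 ≤ Va x) ∧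
      ∀ xs ∈ X,
        ((∀ z ∈ X, psiReg θ a xs z ≤ psiReg θ a xs xs) ↔ Va xs = 0) ∧
        (Va xs = 0 ↔ ∀ y ∈ X, 0 ≤ (inner ℝ (gnepF θ xs) (y - xs) : ℝ)) := by
  have nonneg : ∀ x ∈ X, 0 ≤ Va x := by
    intro x hx
    obtain ⟨y, hy, hmax, heq⟩ := hVa x hx
    rw [heq]
    calc (0:ℝ) = psiReg θ a x x := (psiReg_self θ a x).symm
      _ ≤ psiReg θ a x y := hmax x hx
  refine ⟨nonneg, fun xs hxs => ?_⟩
  obtain ⟨y0, hy0, hmax0, heq0⟩ := hVa xs hxs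
  have iff1 : (∀ z ∈ X, psiReg θ a xs z ≤ psiReg θ a xs xs) ↔ Va xs = 0 := by
    constructor
    · intro h
      have h1 : Va xs ≤ 0 := by
        rw [heq0]
        have h2 := h y0 hy0
        rwa [psiReg_self] at h2
      linarith [nonneg xs hxs]
    · intro h z hz
      rw [psiReg_self]
      calc psiReg θ a xs z ≤ psiReg θ a xs y0 := hmax0 z hz
        _ = Va xs := heq0.symm
        _ = 0 := h
  refine ⟨iff1, ?_, ?_⟩
  · -- Va xs = 0 → VI
    intro hv0 y hy
    have hmaxall : ∀ z ∈ X, psiReg θ a xs z ≤ 0 := by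
      intro z hz
      have := (iff1.mpr hv0) z hz
      rwa [psiReg_self] at this
    set D : ℝ := ∑ i, (inner ℝ (gnepF θ xs i) (y i - xs i) : ℝ) with hDdef
    set C : ℝ := ∑ i, ‖xs i - y i‖ ^ 2 with hCdef
    have hCnn : 0 ≤ C := Finset.sum_nonneg fun i _ => by positivity
    have hg : HasDerivAt
        (fun t : ℝ => ∑ i, θ i (WithLp.toLp 2 (Function.update (WithLp.ofLp xs) i (xs i + t • (y i - xs i))))) D 0 :=
      HasDerivAt.fun_sum fun i _ => hasDerivAt_theta_line θ hθdiff i xs (y i - xs i)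
    set g : ℝ → ℝ := fun t => ∑ i, θ i (WithLp.toLp 2 (Function.update (WithLp.ofLp xs) i (xs i + t • (y i - xs i))))
      with hgdef
    have hg0 : g 0 = ∑ i, θ i xs := by
      simp [hgdef, Function.update_eq_self]
    have hD : D = (inner ℝ (gnepF θ xs) (y - xs) : ℝ) := by
      rw [hDdef]
      simp [PiLp.inner_apply, PiLp.sub_apply]
    have hslopebd : ∀ t ∈ Set.Ioc (0:ℝ) 1, -(a/2)*t*C ≤ slope g 0 t := by
      intro t ht
      obtain ⟨ht0, ht1⟩ := ht
      have hzmem : xs + t • (y - xs) ∈ X :=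
        hXconv.add_smul_sub_mem hxs hy ⟨le_of_lt ht0, ht1⟩
      have hψ := hmaxall _ hzmem
      have hcompute : psiReg θ a xs (xs + t • (y - xs)) =
          (∑ i, θ i xs) - g t - a/2 * t^2 * C := by
        unfold psiReg
        rw [hgdef, hCdef]
        rw [Finset.mul_sum, ← Finset.sum_sub_distrib, ← Finset.sum_sub_distrib]
        apply Finset.sum_congr rfl
        intro i _
        have happ : (xs + t • (y - xs)) i = xs i + t • (y i - xs i) := by
          simp [PiLp.add_apply, PiLp.smul_apply, PiLp.sub_apply]
        rw [happ]
        have hdiff : xs i - (xs i + t • (y i - xs i)) = t • (xs i - y i) := by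
          module
        rw [hdiff, norm_smul]
        simp [Real.norm_eq_abs, mul_pow, sq_abs]
        ring
      rw [hcompute] at hψ
      rw [slope_def_field]
      rw [le_div_iff₀ (by linarith : (0:ℝ) < t - 0)]
      have hg0' := hg0
      nlinarith [hψ, hg0']
    have hne : (𝓝[>] (0:ℝ)).NeBot := nhdsGT_neBot 0
    have hlim : Filter.Tendsto (slope g 0) (𝓝[>] (0:ℝ)) (𝓝 D) := by
      have h1 := hasDerivAt_iff_tendsto_slope.mp hg
      exact h1.mono_left (nhdsWithin_mono 0 fun t ht => ne_of_gt ht)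
    have hlim2 : Filter.Tendsto (fun t : ℝ => -(a/2)*t*C) (𝓝[>] (0:ℝ)) (𝓝 0) := by
      have hcont : Filter.Tendsto (fun t : ℝ => -(a/2)*t*C) (𝓝 0) (𝓝 (-(a/2)*0*C)) := by
        exact ((continuous_const.mul continuous_id).mul continuous_const).tendsto 0
      have h2 := hcont.mono_left (nhdsWithin_le_nhds (s := Set.Ioi (0:ℝ)))
      simpa using h2
    have hDnn : 0 ≤ D := by
      refine le_of_tendsto_of_tendsto hlim2 hlim ?_
      have hIoc : Set.Ioc (0:ℝ) 1 ∈ 𝓝[>] (0:ℝ) :=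
        Ioc_mem_nhdsGT_of_mem (Set.mem_Ico.mpr ⟨le_refl 0, zero_lt_one⟩)
      filter_upwards [hIoc] with t ht
      exact hslopebd t ht
    rwa [hD] at hDnn
  · -- VI → Va xs = 0
    intro hVI
    apply iff1.mp
    intro z hz
    rw [psiReg_self]
    have hterm : ∀ i ∈ Finset.univ, θ i xs - θ i (WithLp.toLp 2 (Function.update (WithLp.ofLp xs) i (z i))) -
        a/2 * ‖xs i - z i‖^2 ≤ -(inner ℝ (gnepF θ xs i) (z i - xs i) : ℝ) := by
      intro i _
      have h := grad_ineq θ hθdiff hθconv i xs (z i)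
      have hsq : (0:ℝ) ≤ a/2 * ‖xs i - z i‖^2 := by positivity
      linarith
    calc psiReg θ a xs z ≤ ∑ i, -(inner ℝ (gnepF θ xs i) (z i - xs i) : ℝ) :=
          Finset.sum_le_sum hterm
      _ = -(inner ℝ (gnepF θ xs) (z - xs) : ℝ) := by
          simp [PiLp.inner_apply, PiLp.sub_apply]
      _ ≤ 0 := neg_nonpos.mpr (hVI z hz)
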